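/- Let k ≥ 2 be an integer, let a and c be Laurent polynomials in ℝ[x,x⁻¹] with nonnegative coefficients, let b ∈ ℝ[x,x⁻¹] have all coefficients at exponents not divisible by k equal to zero, and let ε > 0 satisfy (k² − k)·ε < 1/2. If ‖a·c − b‖₁ < ε·a(1)·c(1), then there exist j ∈ {0, 1, …, k−1} and Laurent polynomials a', c' ∈ ℝ[x,x⁻¹], each with nonnegative coefficients and supported on exponents divisible by k, such that ‖x^j·a' − a‖₁ < (k² − k)·ε·a(1) and ‖x^{−j}·c' − c‖₁ < (k² − k)·ε·c(1). -/

import Mathlib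

open Finsupp

/-- The coefficients of a real Laurent polynomial. -/
def lcoeff (p : AddMonoidAlgebra ℝ ℤ) : ℤ →₀ ℝ := p.coeff

/-- The `l¹` norm of a real Laurent polynomial. -/
noncomputable def l1R (p : AddMonoidAlgebra ℝ ℤ) : ℝ := (lcoeff p).sum fun _ c => |c|

/-- Evaluation of a real Laurent polynomial at `x = 1`. -/
noncomputable def ev1 (p : AddMonoidAlgebra ℝ ℤ) : ℝ := (lcoeff p).sum fun _ c => c

section Aux

lemma lcoeff_sub (p q : AddMonoidAlgebra ℝ ℤ) : lcoeff (p - q) = lcoeff p - lcoeff q := rfl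

lemma lcoeff_add (p q : AddMonoidAlgebra ℝ ℤ) : lcoeff (p + q) = lcoeff p + lcoeff q := rfl

lemma lcoeff_single (a : ℤ) (b : ℝ) :
    lcoeff (AddMonoidAlgebra.single a b) = Finsupp.single a b := rfl

lemma ev1_def (p : AddMonoidAlgebra ℝ ℤ) :
    ev1 p = ∑ m ∈ (lcoeff p).support, lcoeff p m := rfl

lemma l1R_def (p : AddMonoidAlgebra ℝ ℤ) :
    l1R p = ∑ m ∈ (lcoeff p).support, |lcoeff p m| := rfl

lemma l1R_nonneg (p : AddMonoidAlgebra ℝ ℤ) : 0 ≤ l1R p :=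
  Finset.sum_nonneg fun _ _ => abs_nonneg _

lemma ev1_nonneg {p : AddMonoidAlgebra ℝ ℤ} (h : ∀ m, 0 ≤ lcoeff p m) : 0 ≤ ev1 p :=
  Finset.sum_nonneg fun m _ => h m

lemma ev1_sum_subset {p : AddMonoidAlgebra ℝ ℤ} {s : Finset ℤ}
    (h : (lcoeff p).support ⊆ s) : ev1 p = ∑ m ∈ s, lcoeff p m :=
  Finset.sum_subset h fun m _ hm => Finsupp.notMem_support_iff.mp hm

/-- Evaluation at 1 as a ring hom. -/
noncomputable def evh : AddMonoidAlgebra ℝ ℤ →+* ℝ :=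
  AddMonoidAlgebra.liftNCRingHom (RingHom.id ℝ) 1 (fun _ _ => Commute.all _ _)

lemma ev1_eq_evh (p : AddMonoidAlgebra ℝ ℤ) : ev1 p = evh p := by
  have : evh p = (lcoeff p).sum fun _ b => b * 1 := rfl
  rw [this, ev1]
  exact Finsupp.sum_congr fun m _ => (mul_one _).symm

lemma ev1_mul (p q : AddMonoidAlgebra ℝ ℤ) : ev1 (p * q) = ev1 p * ev1 q := by
  simp only [ev1_eq_evh, map_mul]

lemma ev1_sub (p q : AddMonoidAlgebra ℝ ℤ) : ev1 (p - q) = ev1 p - ev1 q := by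
  simp only [ev1_eq_evh, map_sub]

lemma l1R_eq_neg_ev1 {p : AddMonoidAlgebra ℝ ℤ} (h : ∀ m, lcoeff p m ≤ 0) :
    l1R p = - ev1 p := by
  rw [l1R_def, ev1_def, ← Finset.sum_neg_distrib]
  exact Finset.sum_congr rfl fun m _ => abs_of_nonpos (h m)

end Aux

section Part

variable (k : ℕ)

/-- The part of a Laurent polynomial supported on exponents congruent to `r` mod `k`. -/
noncomputable def part (r : ZMod k) (p : AddMonoidAlgebra ℝ ℤ) : AddMonoidAlgebra ℝ ℤ :=
  AddMonoidAlgebra.ofCoeff (Finsupp.filter (fun m : ℤ => (m : ZMod k) = r) p.coeff)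

variable {k}

lemma part_apply (r : ZMod k) (p : AddMonoidAlgebra ℝ ℤ) (m : ℤ) :
    lcoeff (part k r p) m = if (m : ZMod k) = r then lcoeff p m else 0 :=
  Finsupp.filter_apply _ _ m

lemma part_support_subset (r : ZMod k) (p : AddMonoidAlgebra ℝ ℤ) :
    (lcoeff (part k r p)).support ⊆ (lcoeff p).support := by
  intro m hm
  rw [Finsupp.mem_support_iff] at hm ⊢
  rw [part_apply] at hm
  intro h; apply hm; split <;> simp [h]

lemma part_nonneg {p : AddMonoidAlgebra ℝ ℤ} (hp : ∀ m, 0 ≤ lcoeff p m) (r : ZMod k) (m : ℤ) :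
    0 ≤ lcoeff (part k r p) m := by
  rw [part_apply]; split
  · exact hp m
  · exact le_rfl

lemma sub_part_nonneg {p : AddMonoidAlgebra ℝ ℤ} (hp : ∀ m, 0 ≤ lcoeff p m) (r : ZMod k) (m : ℤ) :
    0 ≤ lcoeff (p - part k r p) m := by
  rw [lcoeff_sub, Finsupp.sub_apply, part_apply]
  split
  · simp
  · simpa using hp m

lemma part_le {p : AddMonoidAlgebra ℝ ℤ} (hp : ∀ m, 0 ≤ lcoeff p m) (r : ZMod k) (m : ℤ) :
    lcoeff (part k r p) m ≤ lcoeff p m := by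
  rw [part_apply]; split
  · exact le_rfl
  · exact hp m

lemma part_mem_res (r : ZMod k) (p : AddMonoidAlgebra ℝ ℤ) {m : ℤ}
    (h : lcoeff (part k r p) m ≠ 0) : (m : ZMod k) = r := by
  by_contra hm
  exact h (by rw [part_apply, if_neg hm])

lemma sub_part_not_mem_res (r : ZMod k) (p : AddMonoidAlgebra ℝ ℤ) {m : ℤ}
    (h : lcoeff (p - part k r p) m ≠ 0) : (m : ZMod k) ≠ r := by
  intro hm
  apply h
  rw [lcoeff_sub, Finsupp.sub_apply, part_apply, if_pos hm, sub_self]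

lemma sum_part [NeZero k] (p : AddMonoidAlgebra ℝ ℤ) :
    ∑ r : ZMod k, ev1 (part k r p) = ev1 p := by
  have h1 : ∀ r : ZMod k, ev1 (part k r p) =
      ∑ m ∈ (lcoeff p).support, if (m : ZMod k) = r then lcoeff p m else 0 := by
    intro r
    rw [ev1_sum_subset (part_support_subset r p)]
    exact Finset.sum_congr rfl fun m _ => part_apply r p m
  simp only [h1]
  rw [Finset.sum_comm, ev1_def]
  refine Finset.sum_congr rfl fun m _ => ?_
  rw [Finset.sum_ite_eq (Finset.univ : Finset (ZMod k)) ((m : ZMod k)) (fun _ => lcoeff p m)]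
  simp

end Part
section Mul

lemma mul_coeff_nonneg {p q : AddMonoidAlgebra ℝ ℤ}
    (hp : ∀ m, 0 ≤ lcoeff p m) (hq : ∀ m, 0 ≤ lcoeff q m) (m : ℤ) :
    0 ≤ lcoeff (p * q) m := by
  classical
  have : lcoeff (p * q) m
      = (lcoeff p).sum fun a₁ b₁ => (lcoeff q).sum fun a₂ b₂ =>
          if a₁ + a₂ = m then b₁ * b₂ else 0 :=
    AddMonoidAlgebra.mul_apply p q m
  rw [this]
  refine Finset.sum_nonneg fun i _ => Finset.sum_nonneg fun j _ => ?_
  simp only []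
  split
  · exact mul_nonneg (hp i) (hq j)
  · exact le_rfl

lemma mul_support_mem {p q : AddMonoidAlgebra ℝ ℤ} {m : ℤ}
    (h : lcoeff (p * q) m ≠ 0) :
    ∃ m₁ m₂, lcoeff p m₁ ≠ 0 ∧ lcoeff q m₂ ≠ 0 ∧ m₁ + m₂ = m := by
  classical
  have hm : m ∈ (p * q).coeff.support := Finsupp.mem_support_iff.mpr h
  have := AddMonoidAlgebra.support_coeff_mul_subset p q hm
  rw [Finset.mem_add] at this
  obtain ⟨m₁, h₁, m₂, h₂, hsum⟩ := this
  exact ⟨m₁, m₂, Finsupp.mem_support_iff.mp h₁, Finsupp.mem_support_iff.mp h₂, hsum⟩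

/-- The key comparison: a nonneg polynomial `P` pointwise below `Q` and supported away from the
support of `bb` has `ev1 P ≤ l1R (Q - bb)`. -/
lemma ev1_le_l1R {P Q bb : AddMonoidAlgebra ℝ ℤ}
    (hP : ∀ m, 0 ≤ lcoeff P m)
    (hPsupp : ∀ m, lcoeff P m ≠ 0 → lcoeff bb m = 0)
    (hPQ : ∀ m, lcoeff P m ≤ lcoeff Q m) :
    ev1 P ≤ l1R (Q - bb) := by
  rw [ev1_def, l1R_def]
  have key : ∀ m, lcoeff P m ≠ 0 → lcoeff P m ≤ |lcoeff (Q - bb) m| ∧ lcoeff (Q - bb) m ≠ 0 := by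
    intro m hm
    have hb0 : lcoeff bb m = 0 := hPsupp m hm
    have h1 : lcoeff (Q - bb) m = lcoeff Q m := by
      rw [lcoeff_sub, Finsupp.sub_apply, hb0, sub_zero]
    have hPm : 0 < lcoeff P m := lt_of_le_of_ne (hP m) (Ne.symm hm)
    constructor
    · rw [h1]; exact (hPQ m).trans (le_abs_self _)
    · rw [h1]; exact ne_of_gt (lt_of_lt_of_le hPm (hPQ m))
  calc ∑ m ∈ (lcoeff P).support, lcoeff P m
      ≤ ∑ m ∈ (lcoeff P).support, |lcoeff (Q - bb) m| := by
        refine Finset.sum_le_sum fun m hm => ?_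
        exact (key m (Finsupp.mem_support_iff.mp hm)).1
    _ ≤ ∑ m ∈ (lcoeff (Q - bb)).support, |lcoeff (Q - bb) m| := by
        refine Finset.sum_le_sum_of_subset_of_nonneg ?_ fun _ _ _ => abs_nonneg _
        intro m hm
        exact Finsupp.mem_support_iff.mpr (key m (Finsupp.mem_support_iff.mp hm)).2

end Mul
/-- Lemma 7.2: if `a` and `c` have nonnegative coefficients and `a·c` is within
`ε·a(1)·c(1)` of an element `b` of `B = ℝ[x^{±k}]` (with `(k²−k)ε < 1/2`), then, up to a
shift by some `x^j` with `0 ≤ j < k`, both `a` and `c` are close to elements of `B⁺`. -/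
theorem almost_factor_through_B (k : ℕ) (hk : 2 ≤ k)
    (a c b : AddMonoidAlgebra ℝ ℤ)
    (ha : ∀ m, 0 ≤ lcoeff a m) (hc : ∀ m, 0 ≤ lcoeff c m)
    (hb : ∀ m : ℤ, ¬ ((k : ℤ) ∣ m) → lcoeff b m = 0)
    (ε : ℝ) (hε : 0 < ε) (hkε : ((k : ℝ) ^ 2 - k) * ε < 1 / 2)
    (hac : l1R (a * c - b) < ε * ev1 a * ev1 c) :
    ∃ j : ℕ, j < k ∧ ∃ a' c' : AddMonoidAlgebra ℝ ℤ,
      (∀ m, 0 ≤ lcoeff a' m) ∧ (∀ m : ℤ, ¬ ((k : ℤ) ∣ m) → lcoeff a' m = 0) ∧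
      (∀ m, 0 ≤ lcoeff c' m) ∧ (∀ m : ℤ, ¬ ((k : ℤ) ∣ m) → lcoeff c' m = 0) ∧
      l1R (AddMonoidAlgebra.single (j : ℤ) 1 * a' - a) < ((k : ℝ) ^ 2 - k) * ε * ev1 a ∧
      l1R (AddMonoidAlgebra.single (-(j : ℤ)) 1 * c' - c) < ((k : ℝ) ^ 2 - k) * ε * ev1 c := by
  classical
  haveI : NeZero k := ⟨by omega⟩
  set A := ev1 a with hA_def
  set C := ev1 c with hC_def
  set K : ℝ := (k : ℝ) with hK_def
  have hK2 : (2 : ℝ) ≤ K := by rw [hK_def]; exact_mod_cast hk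
  have hKpos : (0 : ℝ) < K := by linarith
  have hE0 : 0 ≤ l1R (a * c - b) := l1R_nonneg _
  have hεAC : 0 < ε * A * C := lt_of_le_of_lt hE0 hac
  have hA0 : 0 ≤ A := ev1_nonneg ha
  have hC0 : 0 ≤ C := ev1_nonneg hc
  have hA : 0 < A := by
    rcases hA0.lt_or_eq with h | h
    · exact h
    · exfalso; rw [← h, mul_zero, zero_mul] at hεAC; exact lt_irrefl 0 hεAC
  have hC : 0 < C := by
    rcases hC0.lt_or_eq with h | h
    · exact h
    · exfalso; rw [← h, mul_zero] at hεAC; exact lt_irrefl 0 hεAC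
  -- choose the residue r carrying at least 1/k of the mass of a
  obtain ⟨r, -, hr⟩ : ∃ r ∈ (Finset.univ : Finset (ZMod k)), A / K ≤ ev1 (part k r a) := by
    apply Finset.exists_le_of_sum_le ⟨0, Finset.mem_univ 0⟩
    rw [sum_part a, Finset.sum_const, Finset.card_univ, ZMod.card k, nsmul_eq_mul, ← hK_def,
      mul_div_cancel₀ _ (ne_of_gt hKpos)]
  set aR := part k r a with haR_def
  set cR := part k (-r) c with hcR_def
  set AR := ev1 aR with hAR_def
  set CR := ev1 cR with hCR_def
  have hAK : A ≤ K * AR := by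
    rw [div_le_iff₀ hKpos] at hr; linarith [hr]
  have hAR0 : 0 ≤ AR := ev1_nonneg (part_nonneg ha r)
  have hCR0 : 0 ≤ CR := ev1_nonneg (part_nonneg hc (-r))
  have hAO0 : 0 ≤ A - AR := by
    have := ev1_nonneg (sub_part_nonneg ha r); rwa [ev1_sub] at this
  have hCO0 : 0 ≤ C - CR := by
    have := ev1_nonneg (sub_part_nonneg hc (-r)); rwa [ev1_sub] at this
  -- key inequality 1 : AR * (C - CR) ≤ l1R (a*c - b)
  have key1 : AR * (C - CR) ≤ l1R (a * c - b) := by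
    have h := ev1_le_l1R (P := aR * (c - cR)) (Q := a * c) (bb := b)
      (mul_coeff_nonneg (part_nonneg ha r) (sub_part_nonneg hc (-r)))
      (by
        intro m hm
        obtain ⟨m₁, m₂, h₁, h₂, rfl⟩ := mul_support_mem hm
        apply hb
        rw [← ZMod.intCast_zmod_eq_zero_iff_dvd]
        intro h0
        push_cast at h0
        rw [part_mem_res r a h₁] at h0
        exact sub_part_not_mem_res (-r) c h₂ (eq_neg_of_add_eq_zero_right h0))
      (by
        intro m
        have hdecomp : a * c - aR * (c - cR) = aR * cR + (a - aR) * c := by ring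
        have h1 : 0 ≤ lcoeff (aR * cR) m :=
          mul_coeff_nonneg (part_nonneg ha r) (part_nonneg hc (-r)) m
        have h2 : 0 ≤ lcoeff ((a - aR) * c) m :=
          mul_coeff_nonneg (sub_part_nonneg ha r) hc m
        have h3 : 0 ≤ lcoeff (a * c - aR * (c - cR)) m := by
          rw [hdecomp, lcoeff_add, Finsupp.add_apply]; linarith
        rw [lcoeff_sub, Finsupp.sub_apply] at h3; linarith)
    rwa [ev1_mul, ev1_sub] at h
  -- key inequality 2 : (A - AR) * CR ≤ l1R (a*c - b)
  have key2 : (A - AR) * CR ≤ l1R (a * c - b) := by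
    have h := ev1_le_l1R (P := (a - aR) * cR) (Q := a * c) (bb := b)
      (mul_coeff_nonneg (sub_part_nonneg ha r) (part_nonneg hc (-r)))
      (by
        intro m hm
        obtain ⟨m₁, m₂, h₁, h₂, rfl⟩ := mul_support_mem hm
        apply hb
        rw [← ZMod.intCast_zmod_eq_zero_iff_dvd]
        intro h0
        push_cast at h0
        rw [part_mem_res (-r) c h₂] at h0
        exact sub_part_not_mem_res r a h₁ (by
          have := eq_neg_of_add_eq_zero_left h0
          rwa [neg_neg] at this))
      (by
        intro m
        have hdecomp : a * c - (a - aR) * cR = aR * c + (a - aR) * (c - cR) := by ring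
        have h1 : 0 ≤ lcoeff (aR * c) m :=
          mul_coeff_nonneg (part_nonneg ha r) hc m
        have h2 : 0 ≤ lcoeff ((a - aR) * (c - cR)) m :=
          mul_coeff_nonneg (sub_part_nonneg ha r) (sub_part_nonneg hc (-r)) m
        have h3 : 0 ≤ lcoeff (a * c - (a - aR) * cR) m := by
          rw [hdecomp, lcoeff_add, Finsupp.add_apply]; linarith
        rw [lcoeff_sub, Finsupp.sub_apply] at h3; linarith)
    rwa [ev1_mul, ev1_sub] at h
  -- numeric consequences
  have hKle : K ≤ K ^ 2 - K := by nlinarith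
  have h2Kle : (2 : ℝ) ≤ K ^ 2 - K := by nlinarith
  have hKε : K * ε < 1 / 2 :=
    lt_of_le_of_lt (mul_le_mul_of_nonneg_right hKle hε.le) hkε
  have hCO : C - CR < K * ε * C := by
    have h1 : A * (C - CR) ≤ (K * AR) * (C - CR) := mul_le_mul_of_nonneg_right hAK hCO0
    have h3 : K * (AR * (C - CR)) ≤ K * l1R (a * c - b) :=
      mul_le_mul_of_nonneg_left key1 hKpos.le
    have h4 : K * l1R (a * c - b) < K * (ε * A * C) :=
      mul_lt_mul_of_pos_left hac hKpos
    have e1 : (K * AR) * (C - CR) = K * (AR * (C - CR)) := by ring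
    have e2 : K * (ε * A * C) = A * (K * ε * C) := by ring
    have h5 : A * (C - CR) < A * (K * ε * C) := by linarith
    exact lt_of_mul_lt_mul_left h5 hA0
  have hCRhalf : C / 2 < CR := by
    have h6 : (K * ε) * C < (1 / 2) * C := mul_lt_mul_of_pos_right hKε hC
    have e1 : K * ε * C = (K * ε) * C := by ring
    linarith
  have hAO : A - AR < 2 * ε * A := by
    have h1 : (A - AR) * (C / 2) ≤ (A - AR) * CR :=
      mul_le_mul_of_nonneg_left hCRhalf.le hAO0
    have e1 : ε * A * C = (2 * ε * A) * (C / 2) := by ring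
    have h5 : (A - AR) * (C / 2) < (2 * ε * A) * (C / 2) := by linarith
    exact lt_of_mul_lt_mul_right h5 (by linarith)
  -- assemble
  set j := r.val with hj_def
  have hjk : j < k := ZMod.val_lt r
  have hjr : ((j : ℕ) : ZMod k) = r := ZMod.natCast_rightInverse r
  refine ⟨j, hjk, AddMonoidAlgebra.single (-(j : ℤ)) 1 * aR,
    AddMonoidAlgebra.single ((j : ℤ)) 1 * cR, ?_, ?_, ?_, ?_, ?_, ?_⟩
  · exact mul_coeff_nonneg
      (fun m => by
        rw [lcoeff_single, Finsupp.single_apply]; split <;> norm_num)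
      (part_nonneg ha r)
  · intro m hm
    by_contra hne
    obtain ⟨m₁, m₂, h₁, h₂, rfl⟩ := mul_support_mem hne
    have hm₁ : m₁ = -(j : ℤ) := by
      by_contra h
      exact h₁ (by rw [lcoeff_single, Finsupp.single_apply, if_neg (fun hh => h hh.symm)])
    apply hm
    rw [← ZMod.intCast_zmod_eq_zero_iff_dvd]
    push_cast
    rw [hm₁, part_mem_res r a h₂]
    push_cast
    rw [hjr, neg_add_cancel]
  · exact mul_coeff_nonneg
      (fun m => by
        rw [lcoeff_single, Finsupp.single_apply]; split <;> norm_num)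
      (part_nonneg hc (-r))
  · intro m hm
    by_contra hne
    obtain ⟨m₁, m₂, h₁, h₂, rfl⟩ := mul_support_mem hne
    have hm₁ : m₁ = (j : ℤ) := by
      by_contra h
      exact h₁ (by rw [lcoeff_single, Finsupp.single_apply, if_neg (fun hh => h hh.symm)])
    apply hm
    rw [← ZMod.intCast_zmod_eq_zero_iff_dvd]
    push_cast
    rw [hm₁, part_mem_res (-r) c h₂]
    push_cast
    rw [hjr, add_neg_cancel]
  · have heq : AddMonoidAlgebra.single ((j : ℤ)) 1 *
        (AddMonoidAlgebra.single (-(j : ℤ)) 1 * aR) = aR := by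
      rw [← mul_assoc, AddMonoidAlgebra.single_mul_single, add_neg_cancel, mul_one,
        ← AddMonoidAlgebra.one_def, one_mul]
    rw [heq]
    have hl1a : l1R (aR - a) = A - AR := by
      rw [l1R_eq_neg_ev1 (fun m => by
        rw [lcoeff_sub, Finsupp.sub_apply]
        have := part_le ha r m; linarith), ev1_sub]
      ring
    rw [hl1a]
    have h7 : 2 * (ε * A) ≤ (K ^ 2 - K) * (ε * A) :=
      mul_le_mul_of_nonneg_right h2Kle (mul_pos hε hA).le
    have e1 : 2 * (ε * A) = 2 * ε * A := by ring
    have e2 : (K ^ 2 - K) * (ε * A) = (K ^ 2 - K) * ε * A := by ring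
    linarith
  · have heq : AddMonoidAlgebra.single (-(j : ℤ)) 1 *
        (AddMonoidAlgebra.single ((j : ℤ)) 1 * cR) = cR := by
      rw [← mul_assoc, AddMonoidAlgebra.single_mul_single, neg_add_cancel, mul_one,
        ← AddMonoidAlgebra.one_def, one_mul]
    rw [heq]
    have hl1c : l1R (cR - c) = C - CR := by
      rw [l1R_eq_neg_ev1 (fun m => by
        rw [lcoeff_sub, Finsupp.sub_apply]
        have := part_le hc (-r) m; linarith), ev1_sub]
      ring
    rw [hl1c]
    have h7 : K * (ε * C) ≤ (K ^ 2 - K) * (ε * C) :=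
      mul_le_mul_of_nonneg_right hKle (mul_pos hε hC).le
    have e1 : K * (ε * C) = K * ε * C := by ring
    have e2 : (K ^ 2 - K) * (ε * C) = (K ^ 2 - K) * ε * C := by ring
    linarith
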